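/- Let L ≥ 2 be an integer, A ∈ ℝ^{M×N}, y ∈ ℝ^M, and let x₀ ∈ ℝ^N have all entries strictly positive. Suppose x : [0,∞) → ℝ^N is differentiable and satisfies the reduced gradient flow x'(t) = −[Aᵀ(A x(t)^{⊙L} − y)] ⊙ x(t)^{⊙(L−1)} for all t ≥ 0, with x(0) = x₀. Let x₊ ∈ S₊ and y₊ := A x₊. Then there exists a constant C > 0 (depending only on A, y and x₀) such that ‖A x(t)^{⊙L} − y₊‖₂² ≤ C/t for every t > 0. -/

import Mathlib

open Filter Topology Matrix

noncomputable section

def nnlsSet {M N : ℕ} (A : Matrix (Fin M) (Fin N) ℝ) (y : Fin M → ℝ) :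
    Set (Fin N → ℝ) :=
  {z | (∀ i, 0 ≤ z i) ∧ ∀ w : Fin N → ℝ, (∀ i, 0 ≤ w i) →
    ∑ j, (A.mulVec z j - y j) ^ 2 ≤ ∑ j, (A.mulVec w j - y j) ^ 2}

/-- Variational inequality for the NNLS minimizer. -/
lemma nnls_vi {M N : ℕ} {A : Matrix (Fin M) (Fin N) ℝ} {y : Fin M → ℝ} {p : Fin N → ℝ}
    (hp : p ∈ nnlsSet A y) {z : Fin N → ℝ} (hz : ∀ i, 0 ≤ z i) :
    0 ≤ ∑ j, (A.mulVec p j - y j) * (A.mulVec z j - A.mulVec p j) := by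
  set c : ℝ := ∑ j, (A.mulVec p j - y j) * (A.mulVec z j - A.mulVec p j) with hc
  set q : ℝ := ∑ j, (A.mulVec z j - A.mulVec p j) ^ 2 with hq
  have hq0 : 0 ≤ q := Finset.sum_nonneg fun j _ => sq_nonneg _
  by_contra hcon
  push_neg at hcon
  set θ : ℝ := min 1 ((-c) / (q + 1)) with hθ
  have hθpos : 0 < θ := lt_min one_pos (div_pos (by linarith) (by linarith))
  have hθ1 : θ ≤ 1 := min_le_left _ _
  have hθq : θ * (q + 1) ≤ -c := by
    have : θ ≤ (-c) / (q + 1) := min_le_right _ _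
    calc θ * (q + 1) ≤ ((-c) / (q + 1)) * (q + 1) := by nlinarith
    _ = -c := by field_simp
  -- the perturbed point
  set zθ : Fin N → ℝ := fun i => p i + θ * (z i - p i) with hzθ
  have hzθ0 : ∀ i, 0 ≤ zθ i := by
    intro i
    have h1 : zθ i = (1 - θ) * p i + θ * z i := by simp [hzθ]; ring
    rw [h1]
    have := hp.1 i
    have := hz i
    nlinarith
  have hmv : ∀ j, A.mulVec zθ j = A.mulVec p j + θ * (A.mulVec z j - A.mulVec p j) := by
    intro j
    simp only [Matrix.mulVec, dotProduct, hzθ]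
    calc ∑ i, A j i * (p i + θ * (z i - p i))
        = ∑ i, (A j i * p i + θ * (A j i * z i - A j i * p i)) :=
          Finset.sum_congr rfl fun i _ => by ring
      _ = (∑ i, A j i * p i) + θ * ((∑ i, A j i * z i) - (∑ i, A j i * p i)) := by
          rw [Finset.sum_add_distrib, ← Finset.sum_sub_distrib, ← Finset.mul_sum]
  have hineq := hp.2 zθ hzθ0
  have hexp : (∑ j, (A.mulVec zθ j - y j) ^ 2)
      = (∑ j, (A.mulVec p j - y j) ^ 2) + 2 * θ * c + θ ^ 2 * q := by
    rw [hc, hq, Finset.mul_sum, Finset.mul_sum, ← Finset.sum_add_distrib, ← Finset.sum_add_distrib]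
    refine Finset.sum_congr rfl fun j _ => ?_
    rw [hmv j]; ring
  rw [hexp] at hineq
  nlinarith

/-- Existence of a mirror potential `h` with derivative `a^{-(L-1)}` and a lower bound `m`. -/
lemma exists_potential (L : ℕ) (hL : 2 ≤ L) :
    ∃ h : ℝ → ℝ, ∃ m : ℝ → ℝ,
      (∀ a : ℝ, 0 < a → HasDerivAt h ((a ^ (L - 1))⁻¹) a) ∧
      (∀ p a : ℝ, 0 ≤ p → 0 < a → m p ≤ a ^ 2 / 2 - p * h a) := by
  rcases eq_or_lt_of_le hL with hL2 | hL3
  · -- L = 2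
    refine ⟨Real.log, fun p => p / 2 - p / 2 * Real.log p, ?_, ?_⟩
    · intro a ha
      have := Real.hasDerivAt_log (ne_of_gt ha)
      simpa [← hL2] using this
    · intro p a hp ha
      rcases eq_or_lt_of_le hp with hp0 | hp0
      · simp [← hp0]; positivity
      · have h1 : Real.log (a ^ 2 / p) ≤ a ^ 2 / p - 1 :=
          Real.log_le_sub_one_of_pos (by positivity)
        rw [Real.log_div (by positivity) (ne_of_gt hp0), Real.log_pow] at h1
        have : (2 : ℝ) * Real.log a - Real.log p ≤ a ^ 2 / p - 1 := by
          simpa using h1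
        have hmul := mul_le_mul_of_nonneg_left this (le_of_lt hp0)
        have hpne : p ≠ 0 := ne_of_gt hp0
        have : p * (2 * Real.log a) - p * Real.log p ≤ a ^ 2 - p := by
          rw [mul_sub] at hmul
          calc p * (2 * Real.log a) - p * Real.log p
              ≤ p * (a ^ 2 / p - 1) := hmul
            _ = a ^ 2 - p := by field_simp
        nlinarith [this]
  · -- L ≥ 3
    refine ⟨fun a => -(((L - 2 : ℕ) : ℝ)⁻¹ * (a ^ (L - 2))⁻¹), fun _ => 0, ?_, ?_⟩
    · intro a ha
      have hane : a ≠ 0 := ne_of_gt ha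
      have h1 : HasDerivAt (fun b : ℝ => b ^ (L - 2)) (((L - 2 : ℕ) : ℝ) * a ^ (L - 2 - 1)) a :=
        hasDerivAt_pow (L - 2) a
      have h2 : HasDerivAt (fun b : ℝ => (b ^ (L - 2))⁻¹)
          (-(((L - 2 : ℕ) : ℝ) * a ^ (L - 2 - 1)) / (a ^ (L - 2)) ^ 2) a :=
        h1.inv (pow_ne_zero _ hane)
      have h3 := (h2.const_mul (((L - 2 : ℕ) : ℝ)⁻¹)).fun_neg
      refine h3.congr_deriv (Eq.symm ?_)
      have hm1 : 1 ≤ L - 2 := by omega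
      have hcast : (0 : ℝ) < ((L - 2 : ℕ) : ℝ) := by
        exact_mod_cast Nat.pos_of_ne_zero (by omega)
      have hpowsplit : a ^ (L - 2 - 1) * a ^ (L - 1) = (a ^ (L - 2)) ^ 2 := by
        rw [← pow_add, ← pow_mul]
        congr 1
        omega
      rw [show (a ^ (L - 2)) ^ 2 = a ^ (L - 2 - 1) * a ^ (L - 1) from hpowsplit.symm]
      have hpe : a ^ (L - 2 - 1) ≠ 0 := pow_ne_zero _ hane
      have hpe2 : a ^ (L - 1) ≠ 0 := pow_ne_zero _ hane
      generalize hgc : ((L - 2 : ℕ) : ℝ) = cL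
      rw [hgc] at hcast
      have hcne : cL ≠ 0 := ne_of_gt hcast
      field_simp
    · intro p a hp ha
      have : 0 ≤ p * (((L - 2 : ℕ) : ℝ)⁻¹ * (a ^ (L - 2))⁻¹) := by positivity
      nlinarith [sq_nonneg a, this]
def GradFlow {M N : ℕ} (A : Matrix (Fin M) (Fin N) ℝ) (y : Fin M → ℝ) (L : ℕ)
    (x : ℝ → Fin N → ℝ) : Prop :=
  ∀ t : ℝ, 0 ≤ t → ∀ i : Fin N,
    HasDerivAt (fun s => x s i)
      (-(Matrix.mulVec Aᵀ (A.mulVec (fun j => x t j ^ L) - y) i * x t i ^ (L - 1))) t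

/-- The flow preserves strict positivity of all coordinates. -/
lemma flow_pos {M N : ℕ} {L : ℕ} (hL : 2 ≤ L) {A : Matrix (Fin M) (Fin N) ℝ}
    {y : Fin M → ℝ} {x : ℝ → Fin N → ℝ} (hflow : GradFlow A y L x)
    (hx0 : ∀ i, 0 < x 0 i) :
    ∀ t : ℝ, 0 ≤ t → ∀ i, 0 < x t i := by
  intro t₀ ht₀ i
  by_contra hneg
  push_neg at hneg
  -- continuity of all coordinates on [0, ∞)
  have hc : ∀ j, ContinuousOn (fun s => x s j) (Set.Ici (0 : ℝ)) :=
    fun j t ht => ((hflow t ht j).continuousAt).continuousWithinAt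
  -- first time coordinate i hits ≤ 0
  set S : Set ℝ := Set.Icc 0 t₀ ∩ (fun s => x s i) ⁻¹' Set.Iic 0 with hS
  have hSclosed : IsClosed S :=
    ContinuousOn.preimage_isClosed_of_isClosed
      ((hc i).mono (Set.Icc_subset_Ici_self)) isClosed_Icc isClosed_Iic
  have hSne : S.Nonempty := ⟨t₀, ⟨⟨ht₀, le_refl t₀⟩, hneg⟩⟩
  have hSbdd : BddBelow S := ⟨0, fun s hs => hs.1.1⟩
  set ts : ℝ := sInf S with hts
  have htsS : ts ∈ S := hSclosed.csInf_mem hSne hSbdd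
  have hts0 : 0 ≤ ts := htsS.1.1
  have htsneg : x ts i ≤ 0 := htsS.2
  have htspos : 0 < ts := by
    rcases eq_or_lt_of_le hts0 with h | h
    · exfalso; rw [← h] at htsneg; exact absurd htsneg (not_le.mpr (hx0 i))
    · exact h
  have hpre : ∀ s, 0 ≤ s → s < ts → 0 < x s i := by
    intro s hs hsts
    by_contra hcon
    push_neg at hcon
    have hsS : s ∈ S := ⟨⟨hs, le_trans hsts.le htsS.1.2⟩, hcon⟩
    exact absurd (csInf_le hSbdd hsS) (not_le.mpr hsts)
  -- bound on the "log-derivative" on [0, ts]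
  set φd : ℝ → ℝ := fun t =>
    -(Matrix.mulVec Aᵀ (A.mulVec (fun j => x t j ^ L) - y) i * x t i ^ (L - 2)) with hφd
  have hφdcont : ContinuousOn φd (Set.Icc 0 ts) := by
    have hcc : ∀ j, ContinuousOn (fun s => x s j) (Set.Icc (0:ℝ) ts) :=
      fun j => (hc j).mono Set.Icc_subset_Ici_self
    have h1 : ∀ k : Fin M, ContinuousOn (fun t => A.mulVec (fun j => x t j ^ L) k - y k)
        (Set.Icc (0:ℝ) ts) := by
      intro k
      have : ContinuousOn (fun t => ∑ m, A k m * x t m ^ L) (Set.Icc (0:ℝ) ts) := by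
        apply continuousOn_finset_sum
        intro m _
        exact ((hcc m).pow L).const_smul (A k m)
      simpa [Matrix.mulVec, dotProduct] using this.fun_sub continuousOn_const
    have h2 : ContinuousOn (fun t => Matrix.mulVec Aᵀ (A.mulVec (fun j => x t j ^ L) - y) i)
        (Set.Icc (0:ℝ) ts) := by
      have : ContinuousOn (fun t => ∑ k, Aᵀ i k * (A.mulVec (fun j => x t j ^ L) k - y k))
          (Set.Icc (0:ℝ) ts) := by
        apply continuousOn_finset_sum
        intro k _
        exact (h1 k).const_smul (Aᵀ i k)
      simpa [Matrix.mulVec, dotProduct, Pi.sub_apply] using this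
    exact (h2.mul ((hcc i).pow (L - 2))).neg
  obtain ⟨K₀, hK₀⟩ := (isCompact_Icc).exists_bound_of_continuousOn hφdcont
  set K : ℝ := max K₀ 0 with hK
  have hKnn : 0 ≤ K := le_max_right _ _
  have hKb : ∀ u ∈ Set.Icc (0:ℝ) ts, ‖φd u‖ ≤ K := fun u hu => le_trans (hK₀ u hu) (le_max_left _ _)
  -- lower bound on x s i for s ∈ [0, ts)
  set ε : ℝ := Real.exp (Real.log (x 0 i) - K * ts) with hε
  have hεpos : 0 < ε := Real.exp_pos _
  have hlow : ∀ s, 0 ≤ s → s < ts → ε ≤ x s i := by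
    intro s hs hsts
    have hsub : Set.Icc (0:ℝ) s ⊆ Set.Icc (0:ℝ) ts :=
      Set.Icc_subset_Icc (le_refl _) hsts.le
    have hder : ∀ u ∈ Set.Icc (0:ℝ) s,
        HasDerivWithinAt (fun t => Real.log (x t i)) (φd u) (Set.Icc (0:ℝ) s) u := by
      intro u hu
      have hupos : 0 < x u i := hpre u hu.1 (lt_of_le_of_lt hu.2 hsts)
      have hxd := hflow u hu.1 i
      have hlog := hxd.log (ne_of_gt hupos)
      have heq : -(Matrix.mulVec Aᵀ (A.mulVec (fun j => x u j ^ L) - y) i * x u i ^ (L - 1))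
          / x u i = φd u := by
        rw [hφd]
        have hL1 : L - 1 = (L - 2) + 1 := by omega
        rw [hL1, pow_succ]
        field_simp
      rw [heq] at hlog
      exact hlog.hasDerivWithinAt
    have hbd : ∀ u ∈ Set.Icc (0:ℝ) s, ‖φd u‖ ≤ K := fun u hu => hKb u (hsub hu)
    have h0mem : (0:ℝ) ∈ Set.Icc (0:ℝ) s := ⟨le_refl _, hs⟩
    have hsmem : s ∈ Set.Icc (0:ℝ) s := ⟨hs, le_refl _⟩
    have hmvt := Convex.norm_image_sub_le_of_norm_hasDerivWithin_le hder hbd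
      (convex_Icc _ _) h0mem hsmem
    have hspos : 0 < x s i := hpre s hs hsts
    have h1 : |Real.log (x s i) - Real.log (x 0 i)| ≤ K * ts := by
      have : ‖s - 0‖ ≤ ts := by
        rw [sub_zero, Real.norm_eq_abs, abs_of_nonneg hs]; exact hsts.le
      calc |Real.log (x s i) - Real.log (x 0 i)| ≤ K * ‖s - 0‖ := hmvt
        _ ≤ K * ts := by nlinarith
    have h2 : Real.log (x 0 i) - K * ts ≤ Real.log (x s i) := by
      have := abs_le.mp h1
      linarith [this.1]
    calc ε = Real.exp (Real.log (x 0 i) - K * ts) := rfl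
      _ ≤ Real.exp (Real.log (x s i)) := Real.exp_le_exp.mpr h2
      _ = x s i := Real.exp_log hspos
  -- take the limit s → ts⁻
  have htend : Tendsto (fun s => x s i) (𝓝[<] ts) (𝓝 (x ts i)) :=
    ((hflow ts hts0 i).continuousAt.tendsto).mono_left nhdsWithin_le_nhds
  have hev : ∀ᶠ s in 𝓝[<] ts, ε ≤ x s i := by
    filter_upwards [Ioo_mem_nhdsLT_of_mem (Set.mem_Ioc.mpr ⟨htspos, le_refl ts⟩)] with s hs
    exact hlow s hs.1.le hs.2
  have : ε ≤ x ts i := ge_of_tendsto htend hev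
  linarith

theorem stmt1 {M N : ℕ} (L : ℕ) (hL : 2 ≤ L)
    (A : Matrix (Fin M) (Fin N) ℝ) (y : Fin M → ℝ)
    (x : ℝ → Fin N → ℝ) (x0 : Fin N → ℝ) (hx0 : ∀ i, 0 < x0 i)
    (hinit : x 0 = x0)
    (hflow : GradFlow A y L x)
    (xp : Fin N → ℝ) (hxp : xp ∈ nnlsSet A y) :
    ∃ C : ℝ, 0 < C ∧ ∀ t : ℝ, 0 < t →
      ∑ j, (A.mulVec (fun i => x t i ^ L) j - A.mulVec xp j) ^ 2 ≤ C / t := by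
  classical
  have hpos : ∀ t, 0 ≤ t → ∀ i, 0 < x t i :=
    flow_pos hL hflow (fun i => by rw [hinit]; exact hx0 i)
  set w : ℝ → Fin N → ℝ := fun t i => x t i ^ L with hw
  set g : ℝ → Fin N → ℝ := fun t i => Matrix.mulVec Aᵀ (A.mulVec (w t) - y) i with hg
  set x' : ℝ → Fin N → ℝ := fun t i => -(g t i * x t i ^ (L - 1)) with hx'
  have hxd : ∀ t, 0 ≤ t → ∀ i, HasDerivAt (fun s => x s i) (x' t i) t :=
    fun t ht i => hflow t ht i
  set w' : ℝ → Fin N → ℝ := fun t i => (L : ℝ) * x t i ^ (L - 1) * x' t i with hw'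
  have hwd : ∀ t, 0 ≤ t → ∀ i, HasDerivAt (fun s => w s i) (w' t i) t :=
    fun t ht i => (hxd t ht i).pow L
  set r : ℝ → Fin M → ℝ := fun t j => A.mulVec (w t) j - y j with hr
  have hrd : ∀ t, 0 ≤ t → ∀ j, HasDerivAt (fun s => r s j) (A.mulVec (w' t) j) t := by
    intro t ht j
    have h1 : HasDerivAt (fun s => ∑ i, A j i * w s i) (∑ i, A j i * w' t i) t :=
      HasDerivAt.fun_sum (fun i _ => (hwd t ht i).const_mul (A j i))
    have h2 := h1.sub_const (y j)
    simp only [hr, Matrix.mulVec, dotProduct]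
    exact h2
  set F : ℝ → ℝ := fun t => ∑ j, r t j ^ 2 with hF
  set F' : ℝ → ℝ := fun t => ∑ j, 2 * r t j * A.mulVec (w' t) j with hF'
  have hFd : ∀ t, 0 ≤ t → HasDerivAt F (F' t) t := by
    intro t ht
    have h := HasDerivAt.fun_sum (u := Finset.univ)
      (fun j (_ : j ∈ Finset.univ) => (hrd t ht j).fun_pow 2)
    refine h.congr_deriv (Eq.symm ?_)
    exact Finset.sum_congr rfl fun j _ => by push_cast; ring
  -- swap lemma
  have hswap : ∀ t (v : Fin N → ℝ),
      ∑ j, r t j * A.mulVec v j = ∑ i, g t i * v i := by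
    intro t v
    calc ∑ j, r t j * A.mulVec v j
        = dotProduct (r t) (A.mulVec v) := rfl
      _ = dotProduct (Matrix.vecMul (r t) A) v := Matrix.dotProduct_mulVec _ _ _
      _ = ∑ i, g t i * v i := by rw [← Matrix.mulVec_transpose]; rfl
  have hF'le : ∀ t, F' t ≤ 0 := by
    intro t
    have h1 : F' t = 2 * ∑ j, r t j * A.mulVec (w' t) j := by
      rw [Finset.mul_sum]; exact Finset.sum_congr rfl fun j _ => by ring
    rw [h1, hswap t (w' t)]
    have h2 : ∀ i : Fin N, g t i * w' t i = -((L : ℝ) * (g t i * x t i ^ (L - 1)) ^ 2) := by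
      intro i; simp only [hw', hx']; ring
    rw [Finset.sum_congr rfl fun i _ => h2 i, Finset.sum_neg_distrib]
    have h3 : 0 ≤ ∑ i, (L : ℝ) * (g t i * x t i ^ (L - 1)) ^ 2 :=
      Finset.sum_nonneg fun i _ => by positivity
    linarith
  -- the mirror potential
  obtain ⟨h, m, hhd, hhm⟩ := exists_potential L hL
  set G : ℝ → ℝ := fun t => ∑ j, r t j * (A.mulVec (w t) j - A.mulVec xp j) with hG
  set D : ℝ → ℝ := fun t => ∑ i, (x t i ^ 2 / 2 - xp i * h (x t i)) with hD
  have hswap2 : ∀ t, ∑ i, g t i * (w t i - xp i) = G t := by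
    intro t
    calc ∑ i, g t i * (w t i - xp i)
        = dotProduct (Matrix.vecMul (r t) A) (w t - xp) := by
          rw [← Matrix.mulVec_transpose]; rfl
      _ = dotProduct (r t) (A.mulVec (w t - xp)) := (Matrix.dotProduct_mulVec _ _ _).symm
      _ = ∑ j, r t j * (A.mulVec (w t) j - A.mulVec xp j) := by
          rw [Matrix.mulVec_sub]; rfl
  have hDd : ∀ t, 0 ≤ t → HasDerivAt D (-G t) t := by
    intro t ht
    have hterm : ∀ i : Fin N, HasDerivAt (fun s => x s i ^ 2 / 2 - xp i * h (x s i))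
        (x t i * x' t i - xp i * ((x t i ^ (L - 1))⁻¹ * x' t i)) t := by
      intro i
      have h1 : HasDerivAt (fun s => x s i ^ 2 / 2) (x t i * x' t i) t := by
        have := ((hxd t ht i).fun_pow 2).div_const 2
        refine this.congr_deriv (Eq.symm ?_)
        push_cast; ring
      have h2 : HasDerivAt (fun s => h (x s i)) ((x t i ^ (L - 1))⁻¹ * x' t i) t :=
        (hhd (x t i) (hpos t ht i)).comp t (hxd t ht i)
      exact h1.sub (h2.const_mul (xp i))
    have hsum := HasDerivAt.fun_sum (u := Finset.univ)
      (fun i (_ : i ∈ Finset.univ) => hterm i)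
    have hval : ∑ i, (x t i * x' t i - xp i * ((x t i ^ (L - 1))⁻¹ * x' t i)) = -G t := by
      have hcoord : ∀ i : Fin N,
          x t i * x' t i - xp i * ((x t i ^ (L - 1))⁻¹ * x' t i)
          = -(g t i * (w t i - xp i)) := by
        intro i
        have hxposi := hpos t ht i
        have hne : x t i ^ (L - 1) ≠ 0 := pow_ne_zero _ (ne_of_gt hxposi)
        have hpowL : x t i ^ (L - 1) * x t i = x t i ^ L := by
          rw [← pow_succ]; congr 1; omega
        simp only [hx', hw]
        calc x t i * -(g t i * x t i ^ (L - 1))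
              - xp i * ((x t i ^ (L - 1))⁻¹ * -(g t i * x t i ^ (L - 1)))
            = -(g t i * (x t i ^ (L - 1) * x t i))
              + xp i * g t i * ((x t i ^ (L - 1))⁻¹ * x t i ^ (L - 1)) := by ring
          _ = -(g t i * x t i ^ L) + xp i * g t i * 1 := by
              rw [hpowL, inv_mul_cancel₀ hne]
          _ = -(g t i * (x t i ^ L - xp i)) := by ring
      rw [Finset.sum_congr rfl fun i _ => hcoord i, Finset.sum_neg_distrib, hswap2 t]
    rw [← hval]
    exact hsum
  set Fstar : ℝ := ∑ j, (A.mulVec xp j - y j) ^ 2 with hFstar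
  set E : ℝ → ℝ := fun t => ∑ j, (A.mulVec (w t) j - A.mulVec xp j) ^ 2 with hE
  have hid : ∀ t, 2 * G t = (F t - Fstar) + E t := by
    intro t
    have h1 : (F t - Fstar) + E t
        = ∑ j, ((r t j ^ 2 - (A.mulVec xp j - y j) ^ 2)
            + (A.mulVec (w t) j - A.mulVec xp j) ^ 2) := by
      rw [Finset.sum_add_distrib, Finset.sum_sub_distrib]
    rw [h1, hG, Finset.mul_sum]
    refine Finset.sum_congr rfl fun j _ => ?_
    simp only [hr]
    ring
  have hwnn : ∀ t, 0 ≤ t → ∀ i, (0:ℝ) ≤ w t i :=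
    fun t ht i => le_of_lt (pow_pos (hpos t ht i) L)
  have hEG : ∀ t, 0 ≤ t → E t ≤ G t := by
    intro t ht
    have hvi := nnls_vi hxp (hwnn t ht)
    have hdiff : G t - E t
        = ∑ j, (A.mulVec xp j - y j) * (A.mulVec (w t) j - A.mulVec xp j) := by
      rw [hG, hE, ← Finset.sum_sub_distrib]
      refine Finset.sum_congr rfl fun j _ => ?_
      simp only [hr]
      ring
    linarith
  have hFge : ∀ t, 0 ≤ t → Fstar ≤ F t := fun t ht => hxp.2 (w t) (hwnn t ht)
  set V' : ℝ → ℝ := fun t => 1 * (F t - Fstar) + t * F' t + 2 * -G t with hV'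
  set V : ℝ → ℝ := fun t => t * (F t - Fstar) + 2 * D t with hV
  have hVd : ∀ t, 0 ≤ t → HasDerivAt V (V' t) t := by
    intro t ht
    have h1 : HasDerivAt (fun s => s * (F s - Fstar)) (1 * (F t - Fstar) + t * F' t) t :=
      (hasDerivAt_id t).mul ((hFd t ht).sub_const Fstar)
    have h2 := (hDd t ht).const_mul (2 : ℝ)
    exact h1.add h2
  have hV'le : ∀ t, 0 ≤ t → V' t ≤ 0 := by
    intro t ht
    have h1 := hid t
    have h2 : t * F' t ≤ 0 := mul_nonpos_of_nonneg_of_nonpos ht (hF'le t)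
    have h3 : 0 ≤ E t := Finset.sum_nonneg fun j _ => sq_nonneg _
    simp only [hV']
    linarith
  have hVanti : AntitoneOn V (Set.Ici (0:ℝ)) := by
    apply antitoneOn_of_hasDerivWithinAt_nonpos (convex_Ici 0)
      (fun t ht => ((hVd t ht).continuousAt).continuousWithinAt)
    · intro t ht
      rw [interior_Ici] at ht
      exact ((hVd t (le_of_lt ht)).hasDerivWithinAt)
    · intro t ht
      rw [interior_Ici] at ht
      exact hV'le t (le_of_lt ht)
  set Dmin : ℝ := ∑ i, m (xp i) with hDmin
  have hDge : ∀ t, 0 ≤ t → Dmin ≤ D t := fun t ht =>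
    Finset.sum_le_sum fun i _ => hhm (xp i) (x t i) (hxp.1 i) (hpos t ht i)
  refine ⟨2 * D 0 - 2 * Dmin + 1, ?_, ?_⟩
  · have := hDge 0 (le_refl 0)
    linarith
  · intro t htpos
    have hVle : V t ≤ V 0 :=
      hVanti (Set.mem_Ici.mpr (le_refl 0)) (Set.mem_Ici.mpr htpos.le) htpos.le
    have hV0 : V 0 = 2 * D 0 := by simp [hV]
    have hVt : V t = t * (F t - Fstar) + 2 * D t := rfl
    have hkey : t * (F t - Fstar) ≤ 2 * D 0 - 2 * Dmin := by
      have := hDge t htpos.le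
      rw [hVt, hV0] at hVle
      linarith
    have hEF : E t ≤ F t - Fstar := by
      have h1 := hid t
      have h2 := hEG t htpos.le
      linarith
    have hgoal : E t ≤ (2 * D 0 - 2 * Dmin + 1) / t := by
      rw [le_div_iff₀ htpos]
      have hmul := mul_le_mul_of_nonneg_right hEF htpos.le
      linarith
    exact hgoal
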